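/- Let a, b, n, s be natural numbers with b < a < n and 0 < s < n, and suppose that a·s + b·(n − s) is even. Then the sequence (a^s, b^{n−s}) consisting of s copies of a followed by n − s copies of b is graphic if and only if s² − (1 + a + b)·s + n·b ≥ 0. -/

import Mathlib

open Finset

lemma mod_inj_interval {m : ℕ} (hm : 0 < m) {c d k k' : ℕ} (hd : d ≤ m)
    (h1 : c ≤ k) (h2 : k < c + d) (h1' : c ≤ k') (h2' : k' < c + d)
    (heq : k % m = k' % m) : k = k' := by
  rcases le_total k k' with h | h
  · have hdvd : m ∣ k' - k := (Nat.modEq_iff_dvd' h).mp heq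
    rcases Nat.eq_zero_or_pos (k' - k) with h0 | h0
    · omega
    · have := Nat.le_of_dvd h0 hdvd; omega
  · have hdvd : m ∣ k - k' := (Nat.modEq_iff_dvd' h).mp heq.symm
    rcases Nat.eq_zero_or_pos (k - k') with h0 | h0
    · omega
    · have := Nat.le_of_dvd h0 hdvd; omega

lemma filter_mod_Ico_len_card {m : ℕ} (hm : 0 < m) (y j : ℕ) (hj : j < m) :
    ((Finset.Ico y (y + m)).filter (fun k => k % m = j)).card = 1 := by
  classical
  have hinj : Set.InjOn (fun k => k % m) (Finset.Ico y (y + m) : Set ℕ) := by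
    intro k hk k' hk' heq
    simp only [Finset.coe_Ico, Set.mem_Ico] at hk hk'
    exact mod_inj_interval hm le_rfl hk.1 hk.2 hk'.1 hk'.2 heq
  have himg : (Finset.Ico y (y + m)).image (fun k => k % m) = Finset.range m := by
    apply Finset.eq_of_subset_of_card_le
    · intro t ht
      simp only [Finset.mem_image] at ht
      obtain ⟨k, _, rfl⟩ := ht
      exact Finset.mem_range.mpr (Nat.mod_lt _ hm)
    · rw [Finset.card_image_of_injOn hinj, Nat.card_Ico, Finset.card_range]
      omega
  have hjm : j ∈ (Finset.Ico y (y + m)).image (fun k => k % m) := by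
    rw [himg]; exact Finset.mem_range.mpr hj
  simp only [Finset.mem_image] at hjm
  obtain ⟨k, hk, hkj⟩ := hjm
  rw [Finset.card_eq_one]
  refine ⟨k, ?_⟩
  ext k'
  simp only [Finset.mem_filter, Finset.mem_singleton]
  constructor
  · rintro ⟨hk', hk'j⟩
    exact hinj (by simpa using hk') (by simpa using hk) (by dsimp only; rw [hk'j, hkj])
  · rintro rfl
    exact ⟨hk, hkj⟩

lemma count_mod : ∀ (x m j : ℕ), 0 < m → j < m →
    ((Finset.range x).filter (fun k => k % m = j)).card
      = x / m + if j < x % m then 1 else 0 := by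
  intro x
  induction x using Nat.strong_induction_on with
  | _ x ih =>
    intro m j hm hj
    rcases lt_or_ge x m with hx | hx
    · have hfil : (Finset.range x).filter (fun k => k % m = j)
          = if j < x then {j} else ∅ := by
        ext k
        simp only [Finset.mem_filter, Finset.mem_range]
        split
        · simp only [Finset.mem_singleton]
          constructor
          · rintro ⟨hk, hkm⟩
            rwa [Nat.mod_eq_of_lt (by omega)] at hkm
          · rintro rfl
            exact ⟨by omega, Nat.mod_eq_of_lt (by omega)⟩
        · simp only [Finset.notMem_empty, iff_false]
          rintro ⟨hk, hkm⟩
          rw [Nat.mod_eq_of_lt (by omega)] at hkm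
          omega
      rw [hfil, Nat.div_eq_of_lt hx, Nat.mod_eq_of_lt hx]
      split <;> simp
    · have hxeq : x = (x - m) + m := by omega
      have hsplit : Finset.range x = Finset.range (x - m) ∪ Finset.Ico (x - m) x := by
        rw [Finset.range_eq_Ico, Finset.range_eq_Ico]
        rw [Finset.Ico_union_Ico_eq_Ico (by omega) (by omega)]
      have hdisj : Disjoint (Finset.range (x - m)) (Finset.Ico (x - m) x) := by
        rw [Finset.disjoint_left]
        intro t ht ht'
        simp at ht ht'
        omega
      rw [hsplit, Finset.filter_union, Finset.card_union_of_disjoint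
        (Finset.disjoint_filter_filter hdisj)]
      have h1 := ih (x - m) (by omega) m j hm hj
      have h2 : ((Finset.Ico (x - m) x).filter (fun k => k % m = j)).card = 1 := by
        have := filter_mod_Ico_len_card hm (x - m) j hj
        rwa [← hxeq] at this
      rw [h1, h2]
      have hdiv : x / m = (x - m) / m + 1 := by
        conv_lhs => rw [hxeq]
        rw [Nat.add_div_right _ hm]
      have hmod : x % m = (x - m) % m := by
        conv_lhs => rw [hxeq]
        rw [Nat.add_mod_right]
      rw [hdiv, hmod]
      ring
open Finset

section Cross
variable (x s m' : ℕ)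

/-- start of the `i`-th block -/
def cS (i : ℕ) : ℕ := i * (x / s) + min i (x % s)

/-- size of the `i`-th block: the cross-degree of the `i`-th vertex on the `S` side -/
def dS (i : ℕ) : ℕ := x / s + if i < x % s then 1 else 0

/-- cross-degree of the `j`-th vertex on the `T` side -/
def dT (j : ℕ) : ℕ := x / m' + if j < x % m' then 1 else 0

/-- the cross-edge relation: `i`-th S-vertex joined to `j`-th T-vertex -/
def crossR (i j : ℕ) : Prop := ∃ k, cS x s i ≤ k ∧ k < cS x s (i+1) ∧ k % m' = j

lemma cS_succ (i : ℕ) : cS x s (i+1) = cS x s i + dS x s i := by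
  unfold cS dS
  rw [Nat.succ_mul]
  rcases le_or_gt (x % s) i with h | h
  · rw [min_eq_right (by omega), min_eq_right h, if_neg (by omega)]
    omega
  · rw [min_eq_left (by omega), min_eq_left (by omega), if_pos h]
    omega

lemma cS_zero : cS x s 0 = 0 := by simp [cS]

lemma cS_top (hs : 0 < s) : cS x s s = x := by
  unfold cS
  rw [min_eq_right (le_of_lt (Nat.mod_lt _ hs))]
  exact Nat.div_add_mod x s

lemma cS_mono {i j : ℕ} (h : i ≤ j) : cS x s i ≤ cS x s j := by
  unfold cS
  have h1 : i * (x / s) ≤ j * (x / s) := Nat.mul_le_mul_right _ h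
  have h2 : min i (x % s) ≤ min j (x % s) := by omega
  omega

lemma dS_le (hs : 0 < s) (hx : x ≤ s * m') (i : ℕ) : dS x s i ≤ m' := by
  have hq := Nat.div_add_mod x s
  have hr : x % s < s := Nat.mod_lt _ hs
  unfold dS
  split
  · -- need x / s + 1 ≤ m'
    by_contra hc
    push_neg at hc
    have h1 : m' ≤ x / s := by omega
    have h2 : s * m' ≤ s * (x / s) := Nat.mul_le_mul_left _ h1
    omega
  · by_contra hc
    push_neg at hc
    have h1 : m' + 1 ≤ x / s := by omega
    have h2 : s * (m' + 1) ≤ s * (x / s) := Nat.mul_le_mul_left _ h1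
    have h3 : s * (m' + 1) = s * m' + s := by ring
    omega

lemma crossR_deg_S (hs : 0 < s) (hm' : 0 < m') (hx : x ≤ s * m') (i : ℕ) :
    {j : Fin m' | crossR x s m' i (j : ℕ)}.ncard = dS x s i := by
  have hset : {j : Fin m' | crossR x s m' i (j : ℕ)} =
      ↑((Finset.Ico (cS x s i) (cS x s (i+1))).image
          (fun k => (⟨k % m', Nat.mod_lt _ hm'⟩ : Fin m'))) := by
    ext j
    simp only [Set.mem_setOf_eq, Finset.coe_image, Set.mem_image, Finset.mem_coe,
      Finset.mem_Ico, crossR]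
    constructor
    · rintro ⟨k, h1, h2, h3⟩
      exact ⟨k, ⟨h1, h2⟩, by ext; simp [h3]⟩
    · rintro ⟨k, ⟨h1, h2⟩, rfl⟩
      exact ⟨k, h1, h2, rfl⟩
  rw [hset, Set.ncard_coe_finset]
  rw [Finset.card_image_of_injOn, Nat.card_Ico, cS_succ]
  · omega
  · intro k hk k' hk' heq
    simp only [Finset.mem_coe, Finset.mem_Ico, cS_succ] at hk hk'
    have : k % m' = k' % m' := by
      have := congrArg Fin.val heq
      simpa using this
    exact mod_inj_interval hm' (dS_le x s m' hs hx i) hk.1 hk.2 hk'.1 hk'.2 this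

lemma crossR_deg_T (hs : 0 < s) (hm' : 0 < m') (hx : x ≤ s * m') (j : ℕ) (hj : j < m') :
    {i : Fin s | crossR x s m' (i : ℕ) j}.ncard = dT x m' j := by
  classical
  have key : ∀ i : ℕ, ((Finset.Ico (cS x s i) (cS x s (i+1))).filter
      (fun k => k % m' = j)).card = if crossR x s m' i j then 1 else 0 := by
    intro i
    split
    · rename_i hcr
      obtain ⟨k₀, hk1, hk2, hk3⟩ := hcr
      rw [Finset.card_eq_one]
      refine ⟨k₀, ?_⟩
      ext k
      simp only [Finset.mem_filter, Finset.mem_Ico, Finset.mem_singleton]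
      constructor
      · rintro ⟨⟨h1, h2⟩, h3⟩
        rw [cS_succ] at h2 hk2
        exact mod_inj_interval hm' (dS_le x s m' hs hx i) h1 h2 hk1 (by omega) (by rw [h3, hk3])
      · rintro rfl
        exact ⟨⟨hk1, hk2⟩, hk3⟩
    · rename_i hcr
      rw [Finset.card_eq_zero, Finset.eq_empty_iff_forall_notMem]
      intro k hk
      simp only [Finset.mem_filter, Finset.mem_Ico] at hk
      exact hcr ⟨k, hk.1.1, hk.1.2, hk.2⟩
  have tele : ∀ t : ℕ, ((Finset.range (cS x s t)).filter (fun k => k % m' = j)).card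
      = ∑ i ∈ Finset.range t, if crossR x s m' i j then 1 else 0 := by
    intro t
    induction t with
    | zero => simp [cS_zero]
    | succ t iht =>
      have hsplit : Finset.range (cS x s (t+1))
          = Finset.range (cS x s t) ∪ Finset.Ico (cS x s t) (cS x s (t+1)) := by
        rw [Finset.range_eq_Ico, Finset.range_eq_Ico, Finset.Ico_union_Ico_eq_Ico (by omega) (cS_mono x s (by omega))]
      have hdisj : Disjoint (Finset.range (cS x s t)) (Finset.Ico (cS x s t) (cS x s (t+1))) := by
        rw [Finset.disjoint_left]
        intro u hu hu'
        simp at hu hu'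
        omega
      rw [hsplit, Finset.filter_union, Finset.card_union_of_disjoint
        (Finset.disjoint_filter_filter hdisj), iht, key t, Finset.sum_range_succ]
  have hmain := tele s
  rw [cS_top x s hs, count_mod x m' j hm' hj] at hmain
  have hset : {i : Fin s | crossR x s m' (i : ℕ) j}.ncard
      = ∑ i ∈ Finset.range s, if crossR x s m' i j then 1 else 0 := by
    have h1 : {i : Fin s | crossR x s m' (i : ℕ) j}.ncard
        = (Finset.univ.filter (fun i : Fin s => crossR x s m' (i : ℕ) j)).card := by
      rw [← Set.ncard_coe_finset]
      congr 1
      ext i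
      simp
    rw [h1, Finset.card_filter]
    exact Fin.sum_univ_eq_sum_range (fun i => if crossR x s m' i j then 1 else 0) s
  rw [hset, ← hmain]
  rfl
open Finset

section Glue
variable {n s : ℕ} (hsn : s ≤ n)

def glueG (GS : SimpleGraph (Fin s)) (GT : SimpleGraph (Fin (n-s))) (R : ℕ → ℕ → Prop) :
    SimpleGraph (Fin n) where
  Adj u v :=
    (∃ (hu : u.val < s) (hv : v.val < s), GS.Adj ⟨u, hu⟩ ⟨v, hv⟩)
    ∨ (∃ (hu : s ≤ u.val) (hv : s ≤ v.val),
        GT.Adj ⟨u.val - s, by have := u.isLt; omega⟩ ⟨v.val - s, by have := v.isLt; omega⟩)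
    ∨ (u.val < s ∧ s ≤ v.val ∧ R u.val (v.val - s))
    ∨ (v.val < s ∧ s ≤ u.val ∧ R v.val (u.val - s))
  symm := ⟨by
    rintro u v (⟨hu, hv, h⟩ | ⟨hu, hv, h⟩ | ⟨h1, h2, h3⟩ | ⟨h1, h2, h3⟩)
    · exact Or.inl ⟨hv, hu, h.symm⟩
    · exact Or.inr (Or.inl ⟨hv, hu, h.symm⟩)
    · exact Or.inr (Or.inr (Or.inr ⟨h1, h2, h3⟩))
    · exact Or.inr (Or.inr (Or.inl ⟨h1, h2, h3⟩))⟩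
  loopless := ⟨by
    rintro u (⟨hu, hv, h⟩ | ⟨hu, hv, h⟩ | ⟨h1, h2, h3⟩ | ⟨h1, h2, h3⟩)
    · exact GS.irrefl h
    · exact GT.irrefl h
    · omega
    · omega⟩

def embS : Fin s → Fin n := fun i => ⟨i.val, lt_of_lt_of_le i.isLt hsn⟩

def embT : Fin (n-s) → Fin n := fun j => ⟨s + j.val, by have := j.isLt; omega⟩

lemma embS_inj : Function.Injective (embS (n := n) (s := s) hsn) := by
  intro i j h
  have := congrArg Fin.val h
  simp [embS] at this
  exact Fin.ext this

lemma embT_inj : Function.Injective (embT (n := n) (s := s) hsn) := by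
  intro i j h
  have := congrArg Fin.val h
  simp [embT] at this
  exact Fin.ext this

lemma embS_eq (v : Fin n) (hv : v.val < s) : embS hsn ⟨v.val, hv⟩ = v := by
  apply Fin.ext; simp [embS]

lemma embT_eq (v : Fin n) (hv : s ≤ v.val) :
    embT hsn ⟨v.val - s, by have := v.isLt; omega⟩ = v := by
  apply Fin.ext; simp [embT]; omega

lemma embT_val_sub (w : Fin (n-s)) : (embT hsn w).val - s = w.val := by
  simp [embT]

lemma glue_nbr_lt (GS : SimpleGraph (Fin s)) (GT : SimpleGraph (Fin (n-s)))
    (R : ℕ → ℕ → Prop) (u : Fin n) (hu : u.val < s) :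
    (glueG hsn GS GT R).neighborSet u =
      (embS hsn '' (GS.neighborSet ⟨u.val, hu⟩))
        ∪ (embT hsn '' {j : Fin (n-s) | R u.val j.val}) := by
  ext v
  simp only [SimpleGraph.mem_neighborSet, glueG, Set.mem_union, Set.mem_image,
    Set.mem_setOf_eq]
  constructor
  · rintro (⟨hu', hv, h⟩ | ⟨hu', hv, h⟩ | ⟨h1, h2, h3⟩ | ⟨h1, h2, h3⟩)
    · exact Or.inl ⟨⟨v.val, hv⟩, h, embS_eq hsn v hv⟩
    · omega
    · exact Or.inr ⟨⟨v.val - s, by have := v.isLt; omega⟩, h3, embT_eq hsn v h2⟩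
    · omega
  · rintro (⟨w, hw, rfl⟩ | ⟨w, hw, rfl⟩)
    · exact Or.inl ⟨hu, w.isLt, hw⟩
    · refine Or.inr (Or.inr (Or.inl ⟨hu, Nat.le_add_right _ _, ?_⟩))
      rw [embT_val_sub hsn w]
      exact hw

lemma glue_nbr_ge (GS : SimpleGraph (Fin s)) (GT : SimpleGraph (Fin (n-s)))
    (R : ℕ → ℕ → Prop) (u : Fin n) (hu : s ≤ u.val) :
    (glueG hsn GS GT R).neighborSet u =
      (embT hsn '' (GT.neighborSet ⟨u.val - s, by have := u.isLt; omega⟩))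
        ∪ (embS hsn '' {i : Fin s | R i.val (u.val - s)}) := by
  ext v
  simp only [SimpleGraph.mem_neighborSet, glueG, Set.mem_union, Set.mem_image,
    Set.mem_setOf_eq]
  constructor
  · rintro (⟨hu', hv, h⟩ | ⟨hu', hv, h⟩ | ⟨h1, h2, h3⟩ | ⟨h1, h2, h3⟩)
    · omega
    · exact Or.inl ⟨⟨v.val - s, by have := v.isLt; omega⟩, h, embT_eq hsn v hv⟩
    · omega
    · exact Or.inr ⟨⟨v.val, h1⟩, h3, embS_eq hsn v h1⟩
  · rintro (⟨w, hw, rfl⟩ | ⟨w, hw, rfl⟩)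
    · refine Or.inr (Or.inl ⟨hu, Nat.le_add_right _ _, ?_⟩)
      have hw' : (⟨(embT hsn w).val - s, by have := (embT hsn w).isLt; omega⟩ : Fin (n-s)) = w := by
        apply Fin.ext; simp [embT]
      rw [hw']
      exact hw
    · exact Or.inr (Or.inr (Or.inr ⟨w.isLt, hu, hw⟩))

lemma disj_embs (P : Set (Fin s)) (Q : Set (Fin (n-s))) :
    Disjoint (embS hsn '' P) (embT hsn '' Q) := by
  rw [Set.disjoint_left]
  rintro v ⟨w, _, rfl⟩ ⟨w', _, hw'⟩
  have := congrArg Fin.val hw'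
  simp [embS, embT] at this
  omega

lemma glue_deg_lt (GS : SimpleGraph (Fin s)) (GT : SimpleGraph (Fin (n-s)))
    (R : ℕ → ℕ → Prop) (u : Fin n) (hu : u.val < s) :
    ((glueG hsn GS GT R).neighborSet u).ncard =
      (GS.neighborSet ⟨u.val, hu⟩).ncard + {j : Fin (n-s) | R u.val j.val}.ncard := by
  rw [glue_nbr_lt hsn GS GT R u hu,
    Set.ncard_union_eq (disj_embs hsn _ _) (Set.toFinite _) (Set.toFinite _),
    Set.ncard_image_of_injective _ (embS_inj hsn), Set.ncard_image_of_injective _ (embT_inj hsn)]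

lemma glue_deg_ge (GS : SimpleGraph (Fin s)) (GT : SimpleGraph (Fin (n-s)))
    (R : ℕ → ℕ → Prop) (u : Fin n) (hu : s ≤ u.val) :
    ((glueG hsn GS GT R).neighborSet u).ncard =
      (GT.neighborSet ⟨u.val - s, by have := u.isLt; omega⟩).ncard
        + {i : Fin s | R i.val (u.val - s)}.ncard := by
  rw [glue_nbr_ge hsn GS GT R u hu,
    Set.ncard_union_eq ((disj_embs hsn _ _).symm) (Set.toFinite _) (Set.toFinite _),
    Set.ncard_image_of_injective _ (embT_inj hsn), Set.ncard_image_of_injective _ (embS_inj hsn)]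

end Glue
open Finset

lemma exists_cross_count (a b s m' : ℕ) (hs : 0 < s) (hm' : 0 < m') (hba : b < a)
    (ha : a < s + m') (heven : Even (a * s + b * m')) (hEG : s * (a + 1) ≤ m' * b + s * s) :
    ∃ x : ℕ, s * (a + 1) ≤ x + s * s ∧ m' * (b + 1) ≤ x + m' * m' ∧
      x ≤ s * a ∧ x ≤ m' * b ∧ x ≤ s * m' ∧ x % 2 = (s * a) % 2 := by
  have hcomm1 : a * s = s * a := mul_comm a s
  have hcomm2 : b * m' = m' * b := mul_comm b m'
  rw [Nat.even_iff, hcomm1, hcomm2] at heven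
  set L1 : ℕ := s * (a + 1) - s * s with hL1
  set L3 : ℕ := m' * (b + 1) - m' * m' with hL3
  set L : ℕ := max L1 L3 with hL
  have hss : s ≤ s * s := Nat.le_mul_of_pos_left s hs
  have hmm : m' ≤ m' * m' := Nat.le_mul_of_pos_left m' hm'
  have hsa1 : s * (a + 1) = s * a + s := by ring
  have hmb1 : m' * (b + 1) = m' * b + m' := by ring
  -- upper bound comparisons
  have c1 : L1 ≤ s * a := by rw [hL1]; omega
  have c2 : L1 ≤ m' * b := by rw [hL1]; omega
  have c3 : L1 ≤ s * m' := by
    have h : s * (a + 1) ≤ s * m' + s * s := by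
      have := Nat.mul_le_mul_left s (show a + 1 ≤ m' + s by omega)
      calc s * (a+1) ≤ s * (m' + s) := this
        _ = s * m' + s * s := by ring
    rw [hL1]; omega
  have c4 : L3 ≤ m' * b := by rw [hL3]; omega
  have c5strict : m' * (b + 1) < m' * (s + m') :=
    Nat.mul_lt_mul_of_pos_left (by omega) hm'
  have c5 : L3 ≤ s * m' := by
    have h : m' * (s + m') = s * m' + m' * m' := by ring
    rw [hL3]; omega
  have c6 : L3 ≤ s * a := by
    rcases lt_or_ge b m' with h | h
    · have : m' * (b + 1) ≤ m' * m' := Nat.mul_le_mul_left m' (by omega)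
      rw [hL3]; omega
    · -- m' ≤ b
      set c : ℕ := b + 1 - m' with hc
      have hbc : b + 1 = m' + c := by omega
      have hcs : c ≤ s - 1 := by omega
      have h1 : m' * (b + 1) = m' * m' + m' * c := by rw [hbc]; ring
      have h2 : m' * c ≤ a * c := Nat.mul_le_mul_right c (by omega)
      have h3 : a * c ≤ a * (s - 1) := Nat.mul_le_mul_left a hcs
      have h4 : a * (s - 1) ≤ a * s := Nat.mul_le_mul_left a (by omega)
      have h5 : a * s = s * a := mul_comm a s
      rw [hL3]; omega
  have hLsa : L ≤ s * a := by omega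
  have hLmb : L ≤ m' * b := by omega
  have hLsm : L ≤ s * m' := by omega
  by_cases hpar : L % 2 = (s * a) % 2
  · refine ⟨L, ?_, ?_, hLsa, hLmb, hLsm, hpar⟩
    · rw [hL1] at *; omega
    · rw [hL3] at *; omega
  · have hsmpos : 0 < s * m' := Nat.mul_pos hs hm'
    have hE : (s - 1) * s % 2 = 0 := by
      have h := Nat.even_mul_succ_self (s - 1)
      rw [show s - 1 + 1 = s by omega] at h
      exact Nat.even_iff.mp h
    have hid : (s - 1) * s + s = s * s := by
      have h := Nat.sub_one_mul s s
      omega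
    have heq5 : m' * (s + m') = s * m' + m' * m' := by ring
    exact ⟨L + 1, by omega, by omega, by omega, by omega, by omega, by omega⟩
open Finset

lemma forward_count {n s a b : ℕ} (hs0 : 0 < s) (hsn : s < n)
    (G : SimpleGraph (Fin n))
    (hdeg : ∀ i : Fin n, (G.neighborSet i).ncard = if (i : ℕ) < s then a else b) :
    a * s ≤ s * (s - 1) + b * (n - s) := by
  classical
  set S : Finset (Fin n) := Finset.univ.filter (fun v => (v : ℕ) < s) with hS
  set T : Finset (Fin n) := Finset.univ.filter (fun v => ¬ (v : ℕ) < s) with hT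
  have hScard : S.card = s := by
    rw [hS]
    rw [Finset.card_filter]
    rw [Fin.sum_univ_eq_sum_range (fun i => if i < s then 1 else 0) n]
    have h2 : (∑ i ∈ Finset.range n, if i < s then 1 else 0)
        = ((Finset.range n).filter (· < s)).card := (Finset.card_filter _ _).symm
    rw [h2]
    have h3 : (Finset.range n).filter (· < s) = Finset.range s := by
      ext k; simp; omega
    rw [h3, Finset.card_range]
  have hTcard : T.card = n - s := by
    have h1 : S.card + T.card = n := by
      rw [hS, hT, Finset.card_filter_add_card_filter_not]
      simp
    omega
  have hcard : ∀ u : Fin n, (G.neighborSet u).ncard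
      = (∑ v ∈ S, if G.Adj u v then 1 else 0) + ∑ v ∈ T, if G.Adj u v then 1 else 0 := by
    intro u
    have h1 : (G.neighborSet u) = ↑(Finset.univ.filter (fun v => G.Adj u v)) := by
      ext v; simp
    rw [h1, Set.ncard_coe_finset, Finset.card_filter]
    exact (Finset.sum_filter_add_sum_filter_not (Finset.univ : Finset (Fin n))
      (fun v => (v : ℕ) < s) (fun v => if G.Adj u v then 1 else 0)).symm
  have hdegS : ∀ u ∈ S, (∑ v ∈ S, if G.Adj u v then 1 else 0)
      + (∑ v ∈ T, if G.Adj u v then 1 else 0) = a := by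
    intro u hu
    have h2 := hdeg u
    rw [if_pos (by simpa [hS] using hu)] at h2
    rw [← hcard u, h2]
  have hsum : ∑ u ∈ S, ((∑ v ∈ S, if G.Adj u v then 1 else 0)
      + (∑ v ∈ T, if G.Adj u v then 1 else 0)) = a * s := by
    rw [Finset.sum_congr rfl hdegS, Finset.sum_const, hScard, smul_eq_mul, mul_comm]
  have hSS : ∀ u ∈ S, (∑ v ∈ S, if G.Adj u v then 1 else 0) ≤ s - 1 := by
    intro u hu
    have h1 : (∑ v ∈ S, if G.Adj u v then 1 else 0) = (S.filter (fun v => G.Adj u v)).card := by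
      rw [Finset.card_filter]
    rw [h1]
    have h2 : S.filter (fun v => G.Adj u v) ⊆ S.erase u := by
      intro v hv
      simp only [Finset.mem_filter] at hv
      rw [Finset.mem_erase]
      exact ⟨fun he => G.irrefl (he ▸ hv.2), hv.1⟩
    have h3 := Finset.card_le_card h2
    rw [Finset.card_erase_of_mem hu, hScard] at h3
    exact h3
  have hcross : (∑ u ∈ S, ∑ v ∈ T, if G.Adj u v then 1 else 0)
      = ∑ v ∈ T, ∑ u ∈ S, if G.Adj v u then 1 else 0 := by
    rw [Finset.sum_comm]
    apply Finset.sum_congr rfl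
    intro v _
    apply Finset.sum_congr rfl
    intro u _
    congr 1
    simp [SimpleGraph.adj_comm]
  have hTbound : ∀ v ∈ T, (∑ u ∈ S, if G.Adj v u then 1 else 0) ≤ b := by
    intro v hv
    have h2 := hdeg v
    rw [if_neg (by simpa [hT] using hv)] at h2
    rw [hcard v] at h2
    omega
  have step1 : a * s ≤ s * (s - 1) + ∑ v ∈ T, ∑ u ∈ S, (if G.Adj v u then 1 else 0) := by
    rw [← hsum, Finset.sum_add_distrib, ← hcross]
    have h1 : ∑ u ∈ S, (∑ v ∈ S, if G.Adj u v then 1 else 0) ≤ s * (s - 1) := by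
      calc ∑ u ∈ S, (∑ v ∈ S, if G.Adj u v then 1 else 0)
          ≤ ∑ u ∈ S, (s - 1) := Finset.sum_le_sum hSS
        _ = s * (s - 1) := by rw [Finset.sum_const, hScard, smul_eq_mul]
    omega
  have step2 : (∑ v ∈ T, ∑ u ∈ S, if G.Adj v u then 1 else 0) ≤ b * (n - s) := by
    calc (∑ v ∈ T, ∑ u ∈ S, if G.Adj v u then 1 else 0)
        ≤ ∑ v ∈ T, b := Finset.sum_le_sum hTbound
      _ = b * (n - s) := by rw [Finset.sum_const, hTcard, smul_eq_mul, mul_comm]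
  omega

open Finset

/-- Add a new vertex (`Fin.last m`) to a graph on `Fin m`, joined to the set `B`. -/
def extendG {m : ℕ} (G : SimpleGraph (Fin m)) (B : Finset (Fin m)) : SimpleGraph (Fin (m+1)) where
  Adj u v :=
    (∃ (hu : u.val < m) (hv : v.val < m), G.Adj ⟨u.val, hu⟩ ⟨v.val, hv⟩)
    ∨ ((u : ℕ) < m ∧ (v : ℕ) = m ∧ ∃ (hu : (u:ℕ) < m), (⟨u.val, hu⟩ : Fin m) ∈ B)
    ∨ ((v : ℕ) < m ∧ (u : ℕ) = m ∧ ∃ (hv : (v:ℕ) < m), (⟨v.val, hv⟩ : Fin m) ∈ B)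
  symm := ⟨by
    rintro u v (⟨hu, hv, h⟩ | ⟨h1, h2, h3⟩ | ⟨h1, h2, h3⟩)
    · exact Or.inl ⟨hv, hu, h.symm⟩
    · exact Or.inr (Or.inr ⟨h1, h2, h3⟩)
    · exact Or.inr (Or.inl ⟨h1, h2, h3⟩)⟩
  loopless := ⟨by
    rintro u (⟨hu, hv, h⟩ | ⟨h1, h2, _⟩ | ⟨h1, h2, _⟩)
    · exact G.irrefl h
    · omega
    · omega⟩

lemma extendG_nbr_last {m : ℕ} (G : SimpleGraph (Fin m)) (B : Finset (Fin m)) :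
    (extendG G B).neighborSet (Fin.last m) = Fin.castSucc '' (B : Set (Fin m)) := by
  ext v
  simp only [SimpleGraph.mem_neighborSet, extendG, Set.mem_image, Fin.val_last,
    Finset.mem_coe]
  constructor
  · rintro (⟨hu, hv, h⟩ | ⟨h1, h2, h3⟩ | ⟨h1, h2, h3⟩)
    · omega
    · omega
    · obtain ⟨hv', hB⟩ := h3
      exact ⟨⟨v.val, h1⟩, hB, by ext; simp⟩
  · rintro ⟨i, hi, rfl⟩
    have h1 : ((i.castSucc : Fin (m+1)) : ℕ) < m := by simp
    refine Or.inr (Or.inr ⟨h1, by simp, h1, ?_⟩)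
    simpa using hi
  
lemma extendG_nbr_castSucc {m : ℕ} (G : SimpleGraph (Fin m)) (B : Finset (Fin m)) (i : Fin m) :
    (extendG G B).neighborSet i.castSucc =
      Fin.castSucc '' (G.neighborSet i) ∪ (if i ∈ B then {Fin.last m} else ∅) := by
  ext v
  simp only [SimpleGraph.mem_neighborSet, extendG, Set.mem_union, Set.mem_image,
    Fin.coe_castSucc]
  constructor
  · rintro (⟨hu, hv, h⟩ | ⟨h1, h2, h3⟩ | ⟨h1, h2, h3⟩)
    · left
      exact ⟨⟨v.val, hv⟩, h, by ext; simp⟩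
    · obtain ⟨hu, hB⟩ := h3
      right
      have hiB : i ∈ B := by simpa using hB
      rw [if_pos hiB]
      have : v = Fin.last m := by ext; simp [h2]
      simp [this]
    · exfalso
      have h3 := i.isLt
      have h4 : (i : ℕ) = m := by simpa using h2
      omega
  · rintro (⟨j, hj, rfl⟩ | hv)
    · exact Or.inl ⟨by simpa using i.isLt, by simpa using j.isLt, hj⟩
    · by_cases hiB : i ∈ B
      · rw [if_pos hiB] at hv
        simp only [Set.mem_singleton_iff] at hv
        subst hv
        refine Or.inr (Or.inl ⟨by simpa using i.isLt, by simp, ?_⟩)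
        exact ⟨by simpa using i.isLt, by simpa using hiB⟩
      · rw [if_neg hiB] at hv
        simp at hv

lemma extendG_deg_last {m : ℕ} (G : SimpleGraph (Fin m)) (B : Finset (Fin m)) :
    ((extendG G B).neighborSet (Fin.last m)).ncard = B.card := by
  rw [extendG_nbr_last, Set.ncard_image_of_injective _ (Fin.castSucc_injective m),
    Set.ncard_coe_finset]

lemma extendG_deg_castSucc {m : ℕ} (G : SimpleGraph (Fin m)) (B : Finset (Fin m)) (i : Fin m) :
    ((extendG G B).neighborSet i.castSucc).ncard =
      (G.neighborSet i).ncard + (if i ∈ B then 1 else 0) := by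
  rw [extendG_nbr_castSucc, Set.ncard_union_eq ?dis (Set.toFinite _) (Set.toFinite _)]
  · congr 1
    · exact Set.ncard_image_of_injective _ (Fin.castSucc_injective m)
    · split <;> simp
  case dis =>
    split
    · rw [Set.disjoint_singleton_right]
      rintro ⟨j, _, hj⟩
      exact absurd hj (Fin.castSucc_lt_last j).ne
    · simp

lemma sum_ite_mem_card {m : ℕ} (B : Finset (Fin m)) :
    (∑ i : Fin m, (if i ∈ B then 1 else 0)) = B.card := by
  simp [Finset.sum_boole]

theorem near_regular_graphic : ∀ (m k : ℕ) (d : Fin m → ℕ),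
    (∀ i, d i = k ∨ d i = k + 1) → (∀ i, d i < m) → Even (∑ i, d i) →
    ∃ G : SimpleGraph (Fin m), ∀ i, (G.neighborSet i).ncard = d i := by
  intro m
  induction m with
  | zero => exact fun k d _ _ _ => ⟨⊥, fun i => i.elim0⟩
  | succ m ih =>
    intro k d hdk hdlt heven
    set v := Fin.last m with hv
    set A : Finset (Fin m) := univ.filter (fun i => d i.castSucc = k + 1) with hA
    have hAmem : ∀ i : Fin m, i ∈ A ↔ d i.castSucc = k + 1 := by
      intro i; simp [hA]
    have hsum : ∑ i : Fin (m+1), d i = ∑ i : Fin m, d (i.castSucc) + d v :=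
      Fin.sum_univ_castSucc d
    have hdvk := hdk v
    have hdvlt := hdlt v
    by_cases hcase : d v ≤ A.card
    · -- join the new vertex to a subset of the (k+1)-degree vertices
      obtain ⟨B, hBA, hBcard⟩ := Finset.exists_subset_card_eq hcase
      set d' : Fin m → ℕ := fun i => d (i.castSucc) - (if i ∈ B then 1 else 0) with hd'
      have hBdeg : ∀ i ∈ B, d (i.castSucc) = k + 1 := fun i hi => (hAmem i).1 (hBA hi)
      have hd'eq : ∀ i, d' i + (if i ∈ B then 1 else 0) = d (i.castSucc) := by
        intro i
        by_cases hi : i ∈ B <;> simp [hd', hi]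
        rw [Nat.sub_add_cancel]
        rw [hBdeg i hi]; omega
      have hd'val : ∀ i, d' i = k ∨ d' i = k + 1 := by
        intro i
        by_cases hi : i ∈ B
        · left; simp [hd', hi, hBdeg i hi]
        · simp [hd', hi]; exact hdk i.castSucc
      have hd'sum : ∑ i, d' i + d v + d v = ∑ i : Fin (m+1), d i := by
        have h1 : ∑ i, d' i + (∑ i : Fin m, (if i ∈ B then 1 else 0)) =
            ∑ i : Fin m, d (i.castSucc) := by
          rw [← Finset.sum_add_distrib]
          exact Finset.sum_congr rfl fun i _ => hd'eq i
        rw [sum_ite_mem_card, hBcard] at h1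
        omega
      have heven' : Even (∑ i, d' i) := by
        obtain ⟨r, hr⟩ := heven
        exact ⟨r - d v, by omega⟩
      have hd'lt : ∀ i, d' i < m := by
        intro i
        rcases hd'val i with h | h
        · -- d' i = k ; show k < m
          rw [h]
          by_contra hkm
          push_neg at hkm
          -- then k = m, all degrees equal m, A = ∅, d v = m, contradiction with hcase
          have hkm' : k = m := by
            have h1 := hdlt i.castSucc
            have h2 : d' i ≤ d i.castSucc := by simp only [hd']; exact Nat.sub_le _ _
            omega
          have hAempty : A = ∅ := by
            rw [Finset.eq_empty_iff_forall_notMem]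
            intro j hj
            have h1 := (hAmem j).1 hj
            have h2 := hdlt j.castSucc
            omega
          have hB0 : B.card = 0 := by
            have h1 := Finset.card_le_card hBA
            rw [hAempty, Finset.card_empty] at h1
            omega
          have hdv0 : d v = 0 := by
            rw [hAempty] at hcase; simpa using hcase
          have hilt := i.isLt
          rcases hdvk with h2 | h2 <;> omega
        · -- d' i = k + 1 ; show k + 1 < m
          rw [h]
          by_contra hkm
          push_neg at hkm
          have hiB : i ∉ B := by
            intro hi
            have h2 := hBdeg i hi
            have h3 : d' i + 1 = d i.castSucc := by
              have h4 := hd'eq i; simpa [hi] using h4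
            omega
          have hiA : i ∈ A := by
            rw [hAmem]
            have := hd'eq i
            simp [hiB] at this
            omega
          have hk1m : k + 1 = m := by
            have h1 := hdlt i.castSucc
            have h2 := (hAmem i).1 hiA
            omega
          -- B ⊂ A so d v < A.card ≤ m
          have hBssA : B ⊂ A := ⟨hBA, fun hAB => hiB (hAB hiA)⟩
          have hcard : d v < A.card := by
            have := Finset.card_lt_card hBssA
            omega
          have hAlem : A.card ≤ m := by
        
            have := Finset.card_le_univ A
            simpa using this
          have hdvval : d v = k := by rcases hdvk with h2 | h2 <;> omega
          have hAuniv : A = univ := by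
            apply Finset.eq_univ_of_card
            have : m ≤ A.card := by omega
            have := Finset.card_le_univ A
            simp at this ⊢
            omega
          have hall : ∀ j : Fin m, d j.castSucc = m := by
            intro j
            have : j ∈ A := hAuniv ▸ Finset.mem_univ j
            rw [hAmem] at this
            omega
          have hsumval : ∑ i : Fin (m+1), d i = m * m + (m - 1) := by
            rw [hsum]
            have : ∑ i : Fin m, d i.castSucc = m * m := by
              rw [Finset.sum_congr rfl fun j _ => hall j]
              simp [Finset.card_univ, Nat.mul_comm]
            omega
          rw [hsumval] at heven
          have heven2 : Even (m * m + m) := by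
            have : m * m + m = m * (m + 1) := by ring
            rw [this]
            exact Nat.even_mul_succ_self m
          obtain ⟨r1, hr1⟩ := heven
          obtain ⟨r2, hr2⟩ := heven2
          have hm1 : 1 ≤ m := by have := i.isLt; omega
          generalize m * m = X at hr1 hr2
          omega
      obtain ⟨G', hG'⟩ := ih k d' hd'val hd'lt heven'
      refine ⟨extendG G' B, ?_⟩
      intro u
      induction u using Fin.lastCases with
      | last => rw [extendG_deg_last, hBcard]
      | cast i =>
        have h1 := extendG_deg_castSucc G' B i
        have h2 := hG' i
        have h3 := hd'eq i
        omega
    · -- d v > A.card : join new vertex to all of A plus some extra vertices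
      push_neg at hcase
      have hdvm : d v ≤ m := by omega
      have hAcompl : d v - A.card ≤ Aᶜ.card := by
        rw [Finset.card_compl]
        simp
        omega
      obtain ⟨C, hCA, hCcard⟩ := Finset.exists_subset_card_eq hAcompl
      have hdisj : Disjoint A C := by
        rw [Finset.disjoint_right]
        intro x hx
        have := hCA hx
        simp at this
        exact this
      set B : Finset (Fin m) := A ∪ C with hB
      have hBcard : B.card = d v := by
        rw [hB, Finset.card_union_of_disjoint hdisj, hCcard]
        omega
      have hk1 : 1 ≤ k := by
        by_contra hk0
        push_neg at hk0
        interval_cases k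
        · have hdv1 : d v = 1 := by rcases hdvk with h2 | h2 <;> omega
          have hA0 : A.card = 0 := by omega
          have hAempty : A = ∅ := Finset.card_eq_zero.mp hA0
          have hall : ∀ j : Fin m, d j.castSucc = 0 := by
            intro j
            have hj : j ∉ A := by rw [hAempty]; simp
            rw [hAmem] at hj
            rcases hdk j.castSucc with h | h
            · exact h
            · omega
          have : ∑ i : Fin (m+1), d i = 1 := by
            rw [hsum, Finset.sum_congr rfl fun j _ => hall j]
            simp [hdv1]
          rw [this] at heven
          exact (Nat.not_even_one) heven
      set d' : Fin m → ℕ := fun i => d (i.castSucc) - (if i ∈ B then 1 else 0) with hd'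
      have hBdeg : ∀ i ∈ B, 1 ≤ d (i.castSucc) := by
        intro i hi
        rw [hB, Finset.mem_union] at hi
        rcases hi with hi | hi
        · rw [(hAmem i).1 hi]; omega
        · rcases hdk i.castSucc with h | h <;> omega
      have hd'eq : ∀ i, d' i + (if i ∈ B then 1 else 0) = d (i.castSucc) := by
        intro i
        by_cases hi : i ∈ B <;> simp [hd', hi]
        exact Nat.sub_add_cancel (hBdeg i hi)
      have hd'val : ∀ i, d' i = (k-1) ∨ d' i = (k-1) + 1 := by
        intro i
        by_cases hiA : i ∈ A
        · right
          have h1 : i ∈ B := by rw [hB, Finset.mem_union]; exact Or.inl hiA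
          simp [hd', h1, (hAmem i).1 hiA]
          omega
        · have hdi : d i.castSucc = k := by
            rcases hdk i.castSucc with h | h
            · exact h
            · exact absurd ((hAmem i).2 h) hiA
          by_cases hiB : i ∈ B
          · left; simp [hd', hiB, hdi]
          · right; simp [hd', hiB, hdi]; omega
      have hd'sum : ∑ i, d' i + d v + d v = ∑ i : Fin (m+1), d i := by
        have h1 : ∑ i, d' i + (∑ i : Fin m, (if i ∈ B then 1 else 0)) =
            ∑ i : Fin m, d (i.castSucc) := by
          rw [← Finset.sum_add_distrib]
          exact Finset.sum_congr rfl fun i _ => hd'eq i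
        rw [sum_ite_mem_card, hBcard] at h1
        omega
      have heven' : Even (∑ i, d' i) := by
        obtain ⟨r, hr⟩ := heven
        exact ⟨r - d v, by omega⟩
      have hd'lt : ∀ i, d' i < m := by
        intro i
        by_cases hiB : i ∈ B
        · have h1 := hd'eq i
          simp [hiB] at h1
          have h2 := hdlt i.castSucc
          omega
        · -- i ∉ B : d' i = d i.castSucc = k and B.card = d v ≤ m - 1
          have hBlt : B.card ≤ m - 1 := by
            have h1 : B ⊆ univ.erase i := by
              intro x hx
              rw [Finset.mem_erase]
              exact ⟨fun he => hiB (he ▸ hx), Finset.mem_univ x⟩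
            have h2 := Finset.card_le_card h1
            rw [Finset.card_erase_of_mem (Finset.mem_univ i)] at h2
            simpa using h2
          have h1 := hd'eq i
          simp [hiB] at h1
          have hdiA : i ∉ A := by
            intro hiA
            exact hiB (by rw [hB, Finset.mem_union]; exact Or.inl hiA)
          have hdik : d i.castSucc = k := by
            rcases hdk i.castSucc with h2 | h2
            · exact h2
            · exact absurd ((hAmem i).2 h2) hdiA
          have hilt := i.isLt
          rcases hdvk with h2 | h2 <;> omega
      obtain ⟨G', hG'⟩ := ih (k-1) d' hd'val hd'lt heven'
      refine ⟨extendG G' B, ?_⟩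
      intro u
      induction u using Fin.lastCases with
      | last => rw [extendG_deg_last, hBcard]
      | cast i =>
        have h1 := extendG_deg_castSucc G' B i
        have h2 := hG' i
        have h3 := hd'eq i
        omega
open Finset

lemma sum_dS (x s : ℕ) (t : ℕ) : ∑ i ∈ Finset.range t, dS x s i = cS x s t := by
  induction t with
  | zero => simp [cS_zero]
  | succ t iht => rw [Finset.sum_range_succ, iht, cS_succ]

lemma sum_dT (x m' : ℕ) (hm' : 0 < m') : ∑ j ∈ Finset.range m', dT x m' j = x := by
  unfold dT
  rw [Finset.sum_add_distrib, Finset.sum_const, Finset.card_range, smul_eq_mul]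
  have hr : x % m' < m' := Nat.mod_lt _ hm'
  have h2 : (∑ j ∈ Finset.range m', if j < x % m' then 1 else 0) = x % m' := by
    have h3 : (∑ j ∈ Finset.range m', if j < x % m' then 1 else 0)
        = ((Finset.range m').filter (· < x % m')).card := (Finset.card_filter _ _).symm
    have h4 : (Finset.range m').filter (· < x % m') = Finset.range (x % m') := by
      ext k; simp; omega
    rw [h3, h4, Finset.card_range]
  rw [h2]
  have := Nat.div_add_mod x m'
  omega

/-- A sequence of length `n` is graphic if it is the degree sequence of some
finite simple graph on `n` vertices. -/
def IsGraphic {n : ℕ} (d : Fin n → ℕ) : Prop :=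
  ∃ G : SimpleGraph (Fin n), ∀ i, (G.neighborSet i).ncard = d i


lemma backward_graphic (a b n s : ℕ) (hba : b < a) (han : a < n) (hs : 0 < s) (hsn : s < n)
    (heven : Even (a * s + b * (n - s)))
    (hEG : s * (a + 1) ≤ (n - s) * b + s * s) :
    IsGraphic (fun i : Fin n => if (i : ℕ) < s then a else b) := by
  have hm' : 0 < n - s := by omega
  obtain ⟨x, hx1, hx2, hx3, hx4, hx5, hx6⟩ :=
    exists_cross_count a b s (n - s) hs hm' hba (by omega) heven
      (by have : (n-s) * b = b * (n-s) := mul_comm _ _; omega)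
  have hq := Nat.div_add_mod x s
  have hqm := Nat.div_add_mod x (n - s)
  have hrs : x % s < s := Nat.mod_lt _ hs
  have hrm : x % (n - s) < n - s := Nat.mod_lt _ hm'
  have hsa1 : s * (a + 1) = s * a + s := by ring
  have hmb1 : (n - s) * (b + 1) = (n - s) * b + (n - s) := by ring
  -- S-side facts
  have hqa : x / s ≤ a := by
    by_contra hc
    push_neg at hc
    have h1 : s * (a + 1) ≤ s * (x / s) := Nat.mul_le_mul_left s hc
    omega
  have hqa1 : 0 < x % s → x / s + 1 ≤ a := by
    intro h
    by_contra hc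
    push_neg at hc
    have h0 : a ≤ x / s := by omega
    have h1 : s * a ≤ s * (x / s) := Nat.mul_le_mul_left s h0
    omega
  have hdSa : ∀ i : ℕ, dS x s i ≤ a := by
    intro i
    unfold dS
    split
    · exact hqa1 (by omega)
    · omega
  have haqs : a - x / s < s := by
    by_contra hc
    push_neg at hc
    have h1 : x / s + s ≤ a := by omega
    have h2 : s * (x / s + s) ≤ s * a := Nat.mul_le_mul_left s h1
    have h3 : s * (x / s + s) = s * (x / s) + s * s := by ring
    omega
  have hdSlt : ∀ i : ℕ, a - dS x s i < s := by
    intro i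
    unfold dS
    split <;> omega
  have hsum_dS_fin : ∑ i : Fin s, dS x s i.val = x := by
    rw [Fin.sum_univ_eq_sum_range (fun i => dS x s i) s, sum_dS, cS_top x s hs]
  have hsumS : (∑ i : Fin s, (a - dS x s i.val)) + x = s * a := by
    have h1 : ∑ i : Fin s, ((a - dS x s i.val) + dS x s i.val) = s * a := by
      have h2 : ∀ i : Fin s, (a - dS x s i.val) + dS x s i.val = a := by
        intro i
        have := hdSa i.val
        omega
      rw [Finset.sum_congr rfl (fun i _ => h2 i), Finset.sum_const, Finset.card_univ,
        Fintype.card_fin, smul_eq_mul]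
    rw [Finset.sum_add_distrib, hsum_dS_fin] at h1
    exact h1
  have hevenS : Even (∑ i : Fin s, (a - dS x s i.val)) := by
    rw [Nat.even_iff]
    omega
  have hvalS : ∀ i : Fin s, (a - dS x s i.val) = (a - dS x s 0) ∨
      (a - dS x s i.val) = (a - dS x s 0) + 1 := by
    intro i
    unfold dS
    rcases Nat.eq_zero_or_pos (x % s) with h0 | h0
    · rw [h0]
      simp
    · have := hqa1 h0
      rw [if_pos h0]
      split <;> omega
  obtain ⟨GS, hGS⟩ := near_regular_graphic s (a - dS x s 0)
    (fun i : Fin s => a - dS x s i.val) hvalS (fun i => hdSlt i.val) hevenS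
  -- T-side facts
  have hqb : x / (n - s) ≤ b := by
    by_contra hc
    push_neg at hc
    have h1 : (n - s) * (b + 1) ≤ (n - s) * (x / (n - s)) := Nat.mul_le_mul_left _ hc
    omega
  have hqb1 : 0 < x % (n - s) → x / (n - s) + 1 ≤ b := by
    intro h
    by_contra hc
    push_neg at hc
    have h0 : b ≤ x / (n - s) := by omega
    have h1 : (n - s) * b ≤ (n - s) * (x / (n - s)) := Nat.mul_le_mul_left _ h0
    omega
  have hdTb : ∀ j : ℕ, dT x (n - s) j ≤ b := by
    intro j
    unfold dT
    split
    · exact hqb1 (by omega)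
    · omega
  have hbqm : b - x / (n - s) < n - s := by
    by_contra hc
    push_neg at hc
    have h1 : x / (n - s) + (n - s) ≤ b := by omega
    have h2 : (n - s) * (x / (n - s) + (n - s)) ≤ (n - s) * b := Nat.mul_le_mul_left _ h1
    have h3 : (n - s) * (x / (n - s) + (n - s)) = (n - s) * (x / (n - s)) + (n - s) * (n - s) := by
      ring
    omega
  have hdTlt : ∀ j : ℕ, b - dT x (n - s) j < n - s := by
    intro j
    unfold dT
    split <;> omega
  have hsum_dT_fin : ∑ j : Fin (n - s), dT x (n - s) j.val = x := by
    rw [Fin.sum_univ_eq_sum_range (fun j => dT x (n - s) j) (n - s), sum_dT x (n - s) hm']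
  have hsumT : (∑ j : Fin (n - s), (b - dT x (n - s) j.val)) + x = (n - s) * b := by
    have h1 : ∑ j : Fin (n - s), ((b - dT x (n - s) j.val) + dT x (n - s) j.val)
        = (n - s) * b := by
      have h2 : ∀ j : Fin (n - s), (b - dT x (n - s) j.val) + dT x (n - s) j.val = b := by
        intro j
        have := hdTb j.val
        omega
      rw [Finset.sum_congr rfl (fun j _ => h2 j), Finset.sum_const, Finset.card_univ,
        Fintype.card_fin, smul_eq_mul]
    rw [Finset.sum_add_distrib, hsum_dT_fin] at h1
    exact h1
  have hevenT : Even (∑ j : Fin (n - s), (b - dT x (n - s) j.val)) := by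
    rw [Nat.even_iff]
    have hc1 : a * s = s * a := mul_comm _ _
    have hc2 : b * (n - s) = (n - s) * b := mul_comm _ _
    rw [Nat.even_iff] at heven
    omega
  have hvalT : ∀ j : Fin (n - s), (b - dT x (n - s) j.val) = (b - dT x (n - s) 0) ∨
      (b - dT x (n - s) j.val) = (b - dT x (n - s) 0) + 1 := by
    intro j
    unfold dT
    rcases Nat.eq_zero_or_pos (x % (n - s)) with h0 | h0
    · rw [h0]
      simp
    · have := hqb1 h0
      rw [if_pos h0]
      split <;> omega
  obtain ⟨GT, hGT⟩ := near_regular_graphic (n - s) (b - dT x (n - s) 0)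
    (fun j : Fin (n - s) => b - dT x (n - s) j.val) hvalT (fun j => hdTlt j.val) hevenT
  -- glue
  refine ⟨glueG (show s ≤ n by omega) GS GT (crossR x s (n - s)), ?_⟩
  intro u
  by_cases hu : (u : ℕ) < s
  · rw [show (fun i : Fin n => if (i : ℕ) < s then a else b) u = a from if_pos hu]
    have hS1 : (GS.neighborSet ⟨u.val, hu⟩).ncard = a - dS x s u.val := hGS _
    have hS2 := crossR_deg_S x s (n - s) hs hm' hx5 u.val
    rw [glue_deg_lt (show s ≤ n by omega) GS GT (crossR x s (n - s)) u hu, hS1, hS2]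
    have := hdSa u.val
    omega
  · rw [show (fun i : Fin n => if (i : ℕ) < s then a else b) u = b from if_neg hu]
    push_neg at hu
    have hult : (u : ℕ) < n := u.isLt
    have hT2 := crossR_deg_T x s (n - s) hs hm' hx5 (u.val - s) (by omega)
    rw [glue_deg_ge (show s ≤ n by omega) GS GT (crossR x s (n - s)) u hu, hGT, hT2]
    have key : b - dT x (n - s) ((u : ℕ) - s) + dT x (n - s) ((u : ℕ) - s) = b := by
      have := hdTb ((u : ℕ) - s)
      omega
    exact key

/-- For natural numbers `b < a < n`, `0 < s < n` with `a·s + b·(n - s)` even, the sequence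
`(a^s, b^{n-s})` is graphic if and only if `s² - (1 + a + b)·s + n·b ≥ 0`. -/
theorem two_element_graphic_iff (a b n s : ℕ) (hba : b < a) (han : a < n)
    (hs : 0 < s) (hsn : s < n) (heven : Even (a * s + b * (n - s))) :
    IsGraphic (fun i : Fin n => if (i : ℕ) < s then a else b) ↔
      0 ≤ (s : ℤ) ^ 2 - (1 + a + b) * s + n * b := by
  constructor
  · rintro ⟨G, hG⟩
    have h := forward_count hs hsn G (fun i => hG i)
    have hcast : (a : ℤ) * s ≤ s * (s - 1) + b * (n - s) := by
      have h1 : ((a * s : ℕ) : ℤ) ≤ ((s * (s - 1) + b * (n - s) : ℕ) : ℤ) := by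
        exact_mod_cast h
      push_cast [Nat.cast_sub (show 1 ≤ s by omega), Nat.cast_sub hsn.le] at h1
      linarith
    have hns : ((n : ℤ) - s) * b = n * b - s * b := by ring
    nlinarith [hcast]
  · intro h
    apply backward_graphic a b n s hba han hs hsn heven
    have hZ : (s : ℤ) * (a + 1) ≤ ((n - s : ℕ) : ℤ) * b + s * s := by
      push_cast [Nat.cast_sub hsn.le]
      nlinarith [h]
    exact_mod_cast hZ
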